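/- For λ > λ₀ := (28 + 11√7)/9, define h_λ(s) = e^{−s²/4} s^λ and H_λ(s) = h_λ(s−2) + h_λ(s+2). Then H_λ''(s) > 0 for every s ∈ (√(2(λ+2)), √(2(λ+3))). -/

import Mathlib

open Real

lemma aux_d1 (lam t : ℝ) (ht : t ≠ 0) :
    HasDerivAt (fun u : ℝ => Real.exp (-u^2/4) * u ^ lam)
      (Real.exp (-t^2/4) * ((-t/2) * t ^ lam + lam * t ^ (lam-1))) t := by
  have h0 : HasDerivAt (fun u : ℝ => -u^2/4) (-t/2) t := by
    have h := ((hasDerivAt_pow 2 t).neg).div_const 4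
    refine h.congr_deriv ?_
    push_cast
    ring
  have h2 : HasDerivAt (fun u : ℝ => u ^ lam) (lam * t ^ (lam-1)) t :=
    Real.hasDerivAt_rpow_const (Or.inl ht)
  have h := h0.exp.mul h2
  refine h.congr_deriv ?_
  ring

noncomputable def D2F (lam t : ℝ) : ℝ :=
  Real.exp (-t^2/4) * ((-t/2) * ((-t/2) * t ^ lam + lam * t ^ (lam-1))
    + ((-1/2) * t ^ lam + (-t/2) * (lam * t ^ (lam-1)) + lam * ((lam-1) * t ^ (lam-2))))

lemma aux_d2 (lam t : ℝ) (ht : t ≠ 0) :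
    HasDerivAt (fun u : ℝ => Real.exp (-u^2/4) * ((-u/2) * u ^ lam + lam * u ^ (lam-1)))
      (D2F lam t) t := by
  have h0 : HasDerivAt (fun u : ℝ => -u^2/4) (-t/2) t := by
    have h := ((hasDerivAt_pow 2 t).neg).div_const 4
    refine h.congr_deriv ?_
    push_cast
    ring
  have ha : HasDerivAt (fun u : ℝ => -u/2) (-1/2 : ℝ) t := by
    simpa using (hasDerivAt_id t).neg.div_const 2
  have hb : HasDerivAt (fun u : ℝ => u ^ lam) (lam * t ^ (lam-1)) t :=
    Real.hasDerivAt_rpow_const (Or.inl ht)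
  have hc : HasDerivAt (fun u : ℝ => u ^ (lam-1)) ((lam-1) * t ^ (lam-1-1)) t :=
    Real.hasDerivAt_rpow_const (Or.inl ht)
  have hQ := (ha.mul hb).add (hc.const_mul lam)
  have h := h0.exp.mul hQ
  have he : lam - 1 - 1 = lam - 2 := by ring
  rw [he] at h
  unfold D2F
  refine h.congr_deriv ?_
  simp only [Pi.add_apply, Pi.mul_apply]
  ring

lemma aux_eq (lam t : ℝ) (ht : 0 < t) :
    D2F lam t
      = Real.exp (-t^2/4) * (t ^ (lam-2) * (((t^2 - (2*lam+1))^2 - (8*lam+1))/4)) := by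
  have e2 : t ^ lam = t ^ (lam-2) * t ^ 2 := by
    have h := Real.rpow_add ht (lam-2) 2
    rw [Real.rpow_two] at h
    rw [← h]; ring_nf
  have e1 : t ^ (lam-1) = t ^ (lam-2) * t := by
    have h := Real.rpow_add ht (lam-2) 1
    rw [Real.rpow_one] at h
    rw [← h]; ring_nf
  unfold D2F
  rw [e2, e1]
  ring

set_option maxHeartbeats 1000000 in
/-- Convexity of `H_λ` on `(r_{λ+3}, r_{λ+4}) = (√(2(λ+2)), √(2(λ+3)))` for
`λ > λ₀ = (28 + 11√7)/9`, where `H_λ(s) = e^{-(s-2)²/4}(s-2)^λ + e^{-(s+2)²/4}(s+2)^λ`. -/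
theorem H_convex_on_interval (lam : ℝ) (hlam : (28 + 11 * Real.sqrt 7) / 9 < lam)
    (H : ℝ → ℝ)
    (hH : ∀ s : ℝ, H s
        = exp (-(s - 2) ^ 2 / 4) * (s - 2) ^ lam + exp (-(s + 2) ^ 2 / 4) * (s + 2) ^ lam) :
    ∀ s ∈ Set.Ioo (Real.sqrt (2 * (lam + 2))) (Real.sqrt (2 * (lam + 3))),
      0 < deriv (deriv H) s := by
  have h7 : (2.6:ℝ) < Real.sqrt 7 := by
    rw [show (7:ℝ) = 2.6^2 + 0.24 by norm_num]
    nlinarith [Real.sq_sqrt (show (0:ℝ) ≤ 2.6^2 + 0.24 by norm_num),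
      Real.sqrt_nonneg (2.6^2 + 0.24)]
  have hlam6 : (6:ℝ) < lam := by nlinarith
  intro s hs
  obtain ⟨hsl, hsr⟩ := hs
  set C := Real.sqrt (2 * (lam + 2)) with hCdef
  set B := Real.sqrt (2 * (lam + 3)) with hBdef
  have hC2 : C ^ 2 = 2 * (lam + 2) := Real.sq_sqrt (by linarith)
  have hB2 : B ^ 2 = 2 * (lam + 3) := Real.sq_sqrt (by linarith)
  have hC0 : 0 ≤ C := Real.sqrt_nonneg _
  have hB0 : 0 ≤ B := Real.sqrt_nonneg _
  have hC4 : (4:ℝ) ≤ C := by nlinarith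
  have hs4 : (4:ℝ) < s := lt_of_le_of_lt hC4 hsl
  set F1 : ℝ → ℝ := fun x =>
      Real.exp (-(x-2)^2/4) * ((-(x-2)/2) * (x-2) ^ lam + lam * (x-2) ^ (lam-1))
    + Real.exp (-(x+2)^2/4) * ((-(x+2)/2) * (x+2) ^ lam + lam * (x+2) ^ (lam-1)) with hF1def
  have key1 : ∀ x : ℝ, 4 < x → HasDerivAt H (F1 x) x := by
    intro x hx
    have hm : (x - 2 : ℝ) ≠ 0 := by linarith
    have hp : (x + 2 : ℝ) ≠ 0 := by linarith
    have h1 : HasDerivAt (fun y : ℝ => Real.exp (-(y-2)^2/4) * (y-2) ^ lam)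
        (Real.exp (-(x-2)^2/4) * ((-(x-2)/2) * (x-2) ^ lam + lam * (x-2) ^ (lam-1))) x := by
      have := (aux_d1 lam (x-2) hm).comp x ((hasDerivAt_id x).sub_const 2)
      simpa [Function.comp_def] using this
    have h2 : HasDerivAt (fun y : ℝ => Real.exp (-(y+2)^2/4) * (y+2) ^ lam)
        (Real.exp (-(x+2)^2/4) * ((-(x+2)/2) * (x+2) ^ lam + lam * (x+2) ^ (lam-1))) x := by
      have := (aux_d1 lam (x+2) hp).comp x ((hasDerivAt_id x).add_const 2)
      simpa [Function.comp_def] using this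
    have h := h1.add h2
    have hHe : H = fun y : ℝ =>
        Real.exp (-(y - 2) ^ 2 / 4) * (y - 2) ^ lam
          + Real.exp (-(y + 2) ^ 2 / 4) * (y + 2) ^ lam := funext hH
    rw [hHe, hF1def]
    exact h
  have key2 : ∀ x : ℝ, 4 < x → HasDerivAt F1 (D2F lam (x-2) + D2F lam (x+2)) x := by
    intro x hx
    have hm : (x - 2 : ℝ) ≠ 0 := by linarith
    have hp : (x + 2 : ℝ) ≠ 0 := by linarith
    have h1 : HasDerivAt (fun y : ℝ =>
        Real.exp (-(y-2)^2/4) * ((-(y-2)/2) * (y-2) ^ lam + lam * (y-2) ^ (lam-1)))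
        (D2F lam (x-2)) x := by
      have h := (aux_d2 lam (x-2) hm).comp x ((hasDerivAt_id x).sub_const 2)
      simpa [Function.comp_def] using h
    have h2 : HasDerivAt (fun y : ℝ =>
        Real.exp (-(y+2)^2/4) * ((-(y+2)/2) * (y+2) ^ lam + lam * (y+2) ^ (lam-1)))
        (D2F lam (x+2)) x := by
      have h := (aux_d2 lam (x+2) hp).comp x ((hasDerivAt_id x).add_const 2)
      simpa [Function.comp_def] using h
    rw [hF1def]
    exact h1.add h2
  have hev : deriv H =ᶠ[nhds s] F1 := by
    filter_upwards [Ioi_mem_nhds hs4] with x hx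
    exact (key1 x hx).deriv
  have hdd : deriv (deriv H) s = D2F lam (s-2) + D2F lam (s+2) := by
    rw [hev.deriv_eq]
    exact (key2 s hs4).deriv
  rw [hdd, aux_eq lam (s-2) (by linarith), aux_eq lam (s+2) (by linarith)]
  set A := Real.sqrt (8*lam+1) with hAdef
  have hA2 : A ^ 2 = 8*lam+1 := Real.sq_sqrt (by linarith)
  have hA0 : 0 ≤ A := Real.sqrt_nonneg _
  have hA : 9 * A < 12 * lam + 7 := by nlinarith
  -- 9 + A < 4B
  have h4B : 9 + A < 4 * B := by
    by_contra h
    push_neg at h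
    have h' : (4*B) * (4*B) ≤ (9 + A) * (9 + A) :=
      mul_self_le_mul_self (by linarith) h
    nlinarith
  -- A < 7 + 4C
  have h4C : A < 7 + 4 * C := by
    by_contra h
    push_neg at h
    have h' : (7 + 4*C) * (7 + 4*C) ≤ A * A :=
      mul_self_le_mul_self (by linarith) h
    nlinarith
  -- left factor
  have hsq : (s-2)^2 < 2*lam + 10 - 4*B := by
    nlinarith [mul_pos (sub_pos.mpr hsr) (show (0:ℝ) < B + s - 4 by linarith)]
  have hleft : (s-2)^2 < 2*lam + 1 - A := by linarith
  have hpos1 : 0 < (((s-2)^2 - (2*lam+1))^2 - (8*lam+1))/4 := by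
    have f1 : (s-2)^2 - (2*lam+1) + A < 0 := by linarith
    have f2 : (s-2)^2 - (2*lam+1) - A < 0 := by linarith
    nlinarith [mul_pos (neg_pos.mpr f1) (neg_pos.mpr f2)]
  -- right factor
  have hsq2 : 2*lam + 8 + 4*C < (s+2)^2 := by
    nlinarith [mul_pos (sub_pos.mpr hsl) (show (0:ℝ) < s + C by linarith)]
  have hright : 2*lam + 1 + A < (s+2)^2 := by linarith
  have hpos2 : 0 < (((s+2)^2 - (2*lam+1))^2 - (8*lam+1))/4 := by
    have f1 : 0 < (s+2)^2 - (2*lam+1) - A := by linarith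
    have f2 : 0 < (s+2)^2 - (2*lam+1) + A := by linarith
    nlinarith [mul_pos f1 f2]
  have e1 := Real.exp_pos (-(s-2)^2/4)
  have e2 := Real.exp_pos (-(s+2)^2/4)
  have r1 : (0:ℝ) < (s-2) ^ (lam-2) := Real.rpow_pos_of_pos (by linarith) _
  have r2 : (0:ℝ) < (s+2) ^ (lam-2) := Real.rpow_pos_of_pos (by linarith) _
  positivity
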